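/- arXiv:0707.0953 — 3 statements merged into one kernel-verified Lean document; each statement's English description precedes it below -/
import Mathlib

section
/- For any weighted lattice polynomial function p : L^n → L, p(x) = ⋁_{S ⊆ [n]} (p(e_S) ∧ ⋀_{i∈S} x_i), where e_S ∈ {a,b}^n is the characteristic vector of S (i-th component b if i ∈ S, else a). -/
open Finset MeasureTheory ProbabilityTheory

/-- Weighted lattice polynomial functions on the interval L = [a,b] ⊆ ℝ:
built inductively from projections, constants in [a,b], pointwise min and max. -/
inductive IsWLP (a b : ℝ) (n : ℕ) : ((Fin n → ℝ) → ℝ) → Prop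
  | proj (k : Fin n) : IsWLP a b n (fun x => x k)
  | const (c : ℝ) (hc : c ∈ Set.Icc a b) : IsWLP a b n (fun _ => c)
  | inf {p q} : IsWLP a b n p → IsWLP a b n q → IsWLP a b n (fun x => min (p x) (q x))
  | sup {p q} : IsWLP a b n p → IsWLP a b n q → IsWLP a b n (fun x => max (p x) (q x))

/-- The characteristic vector e_S of S ⊆ [n] in {a,b}^n. -/
def charVec (a b : ℝ) {n : ℕ} (S : Finset (Fin n)) : Fin n → ℝ := fun i => if i ∈ S then b else a

lemma isWLP_monotone {a b : ℝ} {n : ℕ} {p : (Fin n → ℝ) → ℝ} (hp : IsWLP a b n p) :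
    Monotone p := by
  induction hp with
  | proj k => exact fun x y h => h k
  | const c hc => exact fun x y _ => le_rfl
  | inf hp hq ihp ihq => exact fun x y h => min_le_min (ihp h) (ihq h)
  | sup hp hq ihp ihq => exact fun x y h => max_le_max (ihp h) (ihq h)

lemma charVec_mono {a b : ℝ} (hab : a ≤ b) {n : ℕ} {S T : Finset (Fin n)} (hST : S ⊆ T) :
    charVec a b S ≤ charVec a b T := by
  intro i
  unfold charVec
  by_cases h : i ∈ S
  · simp [h, hST h]
  · by_cases h' : i ∈ T <;> simp [h, h', hab]

/-- Canonical disjunctive form: p(x) = ⋁_{S ⊆ [n]} (p(e_S) ∧ ⋀_{i∈S} x_i). -/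
theorem wlp_canonical_disjunctive_form (a b : ℝ) (hab : a ≤ b) (n : ℕ)
    (p : (Fin n → ℝ) → ℝ) (hp : IsWLP a b n p) :
    ∀ x : Fin n → ℝ, (∀ i, x i ∈ Set.Icc a b) →
      p x = (Finset.univ (α := Fin n)).powerset.sup' (Finset.powerset_nonempty _)
        (fun S => min (p (charVec a b S)) (S.fold min b x)) := by
  induction hp with
  | proj k =>
    intro x hx
    beta_reduce
    apply le_antisymm
    · have h1 : charVec a b {k} k = b := by simp [charVec]
      have h2 : ({k} : Finset (Fin n)).fold min b x = x k := by
        rw [Finset.fold_singleton, min_eq_left (hx k).2]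
      have h3 : min (charVec a b ({k} : Finset (Fin n)) k) (({k} : Finset (Fin n)).fold min b x)
          = x k := by rw [h1, h2, min_eq_right (hx k).2]
      exact le_trans (le_of_eq h3.symm)
        (Finset.le_sup' (f := fun S => min (charVec a b S k) (S.fold min b x)) (by simp))
    · apply Finset.sup'_le
      intro S _
      by_cases hk : k ∈ S
      · exact le_trans (min_le_right _ _) (Finset.fold_min_le _ |>.mpr (Or.inr ⟨k, hk, le_rfl⟩))
      · have h3 : charVec a b S k = a := by simp [charVec, hk]
        rw [h3]
        exact le_trans (min_le_left _ _) ((hx k).1)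
  | const c hc =>
    intro x hx
    beta_reduce
    apply le_antisymm
    · have h3 : min c ((∅ : Finset (Fin n)).fold min b x) = c := by simp [min_eq_left hc.2]
      exact le_trans (le_of_eq h3.symm)
        (Finset.le_sup' (f := fun S : Finset (Fin n) => min c (S.fold min b x)) (Finset.empty_mem_powerset _))
    · exact Finset.sup'_le _ _ fun S _ => min_le_left _ _
  | @inf pp qq hpp hqq ihp ihq =>
    intro x hx
    have hPx := ihp x hx
    have hQx := ihq x hx
    apply le_antisymm
    · obtain ⟨S, hS, hSe⟩ := Finset.exists_mem_eq_sup' (Finset.powerset_nonempty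
        (Finset.univ (α := Fin n))) (fun S => min (pp (charVec a b S)) (S.fold min b x))
      obtain ⟨T, hT, hTe⟩ := Finset.exists_mem_eq_sup' (Finset.powerset_nonempty
        (Finset.univ (α := Fin n))) (fun S => min (qq (charVec a b S)) (S.fold min b x))
      have key : min (pp x) (qq x) ≤
          min (min (pp (charVec a b (S ∪ T))) (qq (charVec a b (S ∪ T))))
            ((S ∪ T).fold min b x) := by
        rw [hPx, hSe, hQx, hTe]
        refine le_min (le_min ?_ ?_) ?_
        · exact le_trans (min_le_left _ _) (le_trans (min_le_left _ _)
            (isWLP_monotone hpp (charVec_mono hab Finset.subset_union_left)))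
        · exact le_trans (min_le_right _ _) (le_trans (min_le_left _ _)
            (isWLP_monotone hqq (charVec_mono hab Finset.subset_union_right)))
        · rw [Finset.le_fold_min]
          constructor
          · exact le_trans (min_le_left _ _) (min_le_right _ _ |>.trans
              ((Finset.fold_min_le _).mpr (Or.inl le_rfl)))
          · intro i hi
            rcases Finset.mem_union.mp hi with h | h
            · exact le_trans (min_le_left _ _) (min_le_right _ _ |>.trans
                ((Finset.fold_min_le _).mpr (Or.inr ⟨i, h, le_rfl⟩)))
            · exact le_trans (min_le_right _ _) (min_le_right _ _ |>.trans
                ((Finset.fold_min_le _).mpr (Or.inr ⟨i, h, le_rfl⟩)))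
      exact le_trans key (Finset.le_sup'
        (f := fun S => min (min (pp (charVec a b S)) (qq (charVec a b S))) (S.fold min b x))
        (by simp : S ∪ T ∈ (Finset.univ (α := Fin n)).powerset))
    · apply Finset.sup'_le
      intro S _
      refine le_min ?_ ?_
      · rw [hPx]
        exact le_trans (min_le_min (min_le_left _ _) le_rfl)
          (Finset.le_sup' (f := fun S => min (pp (charVec a b S)) (S.fold min b x)) (by simp))
      · rw [hQx]
        exact le_trans (min_le_min (min_le_right _ _) le_rfl)
          (Finset.le_sup' (f := fun S => min (qq (charVec a b S)) (S.fold min b x)) (by simp))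
  | @sup pp qq hpp hqq ihp ihq =>
    intro x hx
    have hPx := ihp x hx
    have hQx := ihq x hx
    apply le_antisymm
    · refine max_le ?_ ?_
      · rw [hPx]
        apply Finset.sup'_le
        intro S hS
        exact le_trans (min_le_min (le_max_left _ _) le_rfl)
          (Finset.le_sup'
            (f := fun S => min (max (pp (charVec a b S)) (qq (charVec a b S))) (S.fold min b x)) hS)
      · rw [hQx]
        apply Finset.sup'_le
        intro S hS
        exact le_trans (min_le_min (le_max_right _ _) le_rfl)
          (Finset.le_sup'
            (f := fun S => min (max (pp (charVec a b S)) (qq (charVec a b S))) (S.fold min b x)) hS)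
    · apply Finset.sup'_le
      intro S hS
      beta_reduce
      rcases le_total (pp (charVec a b S)) (qq (charVec a b S)) with h | h
      · rw [max_eq_right h]
        refine le_trans ?_ (le_max_right (pp x) (qq x))
        rw [hQx]
        exact Finset.le_sup' (f := fun S => min (qq (charVec a b S)) (S.fold min b x)) hS
      · rw [max_eq_left h]
        refine le_trans ?_ (le_max_left (pp x) (qq x))
        rw [hPx]
        exact Finset.le_sup' (f := fun S => min (pp (charVec a b S)) (S.fold min b x)) hS
end

section
/- For any weighted lattice polynomial function p : L^n → L, p(x) = ⋀_{S ⊆ [n]} (p(e_{[n]∖S}) ∨ ⋁_{i∈S} x_i). -/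
open Finset MeasureTheory ProbabilityTheory

lemma wlp_mono {a b : ℝ} {n : ℕ} {p : (Fin n → ℝ) → ℝ} (hp : IsWLP a b n p) :
    ∀ x y : Fin n → ℝ, (∀ i, x i ≤ y i) → p x ≤ p y := by
  induction hp with
  | proj k => intro x y h; exact h k
  | const c hc => intro x y h; exact le_rfl
  | inf hp hq ihp ihq => intro x y h; exact min_le_min (ihp x y h) (ihq x y h)
  | sup hp hq ihp ihq => intro x y h; exact max_le_max (ihp x y h) (ihq x y h)

lemma wlp_lower {a b : ℝ} {n : ℕ} {p : (Fin n → ℝ) → ℝ} (hp : IsWLP a b n p) :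
    ∀ x : Fin n → ℝ, (∀ i, a ≤ x i) → a ≤ p x := by
  induction hp with
  | proj k => intro x h; exact h k
  | const c hc => intro x h; exact hc.1
  | inf hp hq ihp ihq => intro x h; exact le_min (ihp x h) (ihq x h)
  | sup hp hq ihp ihq => intro x h; exact le_trans (ihp x h) (le_max_left _ _)

lemma wlp_maxconst {a b : ℝ} {n : ℕ} {p : (Fin n → ℝ) → ℝ} (hp : IsWLP a b n p) :
    ∀ (z : Fin n → ℝ) (c : ℝ), p (fun i => max (z i) c) ≤ max (p z) c := by
  induction hp with
  | proj k => intro z c; exact le_rfl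
  | const d hd => intro z c; exact le_max_left _ _
  | @inf u v hu hv ihu ihv =>
    intro z c
    refine le_trans (min_le_min (ihu z c) (ihv z c)) (le_of_eq ?_)
    show min (max (u z) c) (max (v z) c) = max (min (u z) (v z)) c
    rcases le_total (u z) (v z) with h | h
    · rw [min_eq_left h, min_eq_left (max_le_max h le_rfl)]
    · rw [min_eq_right h, min_eq_right (max_le_max h le_rfl)]
  | sup hp hq ihp ihq =>
    intro z c
    refine le_trans (max_le_max (ihp z c) (ihq z c)) (le_of_eq ?_)
    rw [max_max_max_comm, max_self]

lemma wlp_threshold {a b : ℝ} {n : ℕ} {p : (Fin n → ℝ) → ℝ} (hp : IsWLP a b n p) :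
    ∀ (c : ℝ) (x u : Fin n → ℝ), (∀ i, x i ≤ c ↔ u i ≤ c) → (p x ≤ c ↔ p u ≤ c) := by
  induction hp with
  | proj k => intro c x u h; exact h k
  | const d hd => intro c x u h; exact Iff.rfl
  | inf hp hq ihp ihq =>
    intro c x u h
    simp only [min_le_iff, ihp c x u h, ihq c x u h]
  | sup hp hq ihp ihq =>
    intro c x u h
    simp only [max_le_iff, ihp c x u h, ihq c x u h]

/-- Canonical conjunctive form: p(x) = ⋀_{S ⊆ [n]} (p(e_{[n]∖S}) ∨ ⋁_{i∈S} x_i). -/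
theorem wlp_canonical_conjunctive_form (a b : ℝ) (hab : a ≤ b) (n : ℕ)
    (p : (Fin n → ℝ) → ℝ) (hp : IsWLP a b n p) :
    ∀ x : Fin n → ℝ, (∀ i, x i ∈ Set.Icc a b) →
      p x = (Finset.univ (α := Fin n)).powerset.inf' (Finset.powerset_nonempty _)
        (fun S => max (p (charVec a b Sᶜ)) (S.fold max a x)) := by
  intro x hx
  apply le_antisymm
  · apply Finset.le_inf'
    intro S _
    set c := S.fold max a x with hc
    have hxy : ∀ i, x i ≤ max (charVec a b Sᶜ i) c := by
      intro i
      by_cases hi : i ∈ S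
      · refine le_trans ?_ (le_max_right _ _)
        exact (Finset.le_fold_max _).mpr (Or.inr ⟨i, hi, le_rfl⟩)
      · refine le_trans (hx i).2 (le_trans (le_of_eq ?_) (le_max_left _ _))
        simp [charVec, hi]
    calc p x ≤ p (fun i => max (charVec a b Sᶜ i) c) := wlp_mono hp _ _ hxy
      _ ≤ max (p (charVec a b Sᶜ)) c := wlp_maxconst hp _ _
  · have hax : a ≤ p x := wlp_lower hp x (fun i => (hx i).1)
    set S : Finset (Fin n) := Finset.univ.filter (fun i => x i ≤ p x) with hS
    have hSmem : S ∈ (Finset.univ (α := Fin n)).powerset := by simp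
    refine le_trans (Finset.inf'_le _ hSmem) ?_
    apply max_le
    · refine (wlp_threshold hp (p x) x (charVec a b Sᶜ) ?_).mp le_rfl
      intro i
      by_cases h : x i ≤ p x
      · have : charVec a b Sᶜ i = a := by simp [charVec, hS, h]
        simp [this, h, hax]
      · have : charVec a b Sᶜ i = b := by simp [charVec, hS, h]
        simp only [this, h, false_iff, not_le]
        exact lt_of_not_ge h |>.trans_le (hx i).2
    · rw [Finset.fold_max_le]
      exact ⟨hax, fun i hi => (Finset.mem_filter.mp hi).2⟩
end

section
/- If X_1,...,X_n are independent uniform random variables on [0,1] and p : [0,1]^n → [0,1] is a weighted lattice polynomial function, then for every integer r ≥ 1, (1/r) E[Y_p^r] = Σ_{S ⊆ [n]} B_{p(e_S)}(n − |S| + r, |S| + 1), where B_z(u,v) = ∫_0^z t^{u−1}(1−t)^{v−1} dt is the incomplete beta function. -/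
open Finset MeasureTheory ProbabilityTheory

section Aux

variable {n : ℕ}

lemma IsWLP.continuous {a b : ℝ} {p : (Fin n → ℝ) → ℝ} (hp : IsWLP a b n p) : Continuous p := by
  induction hp with
  | proj k => exact continuous_apply k
  | const c hc => exact continuous_const
  | inf _ _ ihp ihq => exact ihp.min ihq
  | sup _ _ ihp ihq => exact ihp.max ihq

lemma IsWLP.mem_Icc {p : (Fin n → ℝ) → ℝ} (hp : IsWLP 0 1 n p) {x : Fin n → ℝ}
    (hx : ∀ i, x i ∈ Set.Icc (0:ℝ) 1) : p x ∈ Set.Icc (0:ℝ) 1 := by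
  induction hp with
  | proj k => exact hx k
  | const c hc => exact hc
  | inf _ _ ihp ihq => exact ⟨le_min ihp.1 ihq.1, min_le_of_left_le ihp.2⟩
  | sup _ _ ihp ihq => exact ⟨le_max_of_le_left ihp.1, max_le ihp.2 ihq.2⟩

lemma IsWLP.threshold {p : (Fin n → ℝ) → ℝ} (hp : IsWLP 0 1 n p) {t : ℝ}
    (ht0 : 0 ≤ t) (ht1 : t < 1) (x : Fin n → ℝ) :
    t < p x ↔ t < p (charVec 0 1 (Finset.univ.filter fun i => t < x i)) := by
  induction hp with
  | proj k =>
      simp only [charVec, Finset.mem_filter, Finset.mem_univ, true_and]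
      by_cases h : t < x k <;> simp [h, ht1, not_lt.2 ht0]
  | const c hc => exact Iff.rfl
  | inf _ _ ihp ihq => simp only [lt_min_iff, ihp, ihq]
  | sup _ _ ihp ihq => simp only [lt_max_iff, ihp, ihq]

lemma charVec_mem (S : Finset (Fin n)) (i : Fin n) : charVec 0 1 S i ∈ Set.Icc (0:ℝ) 1 := by
  unfold charVec; split <;> norm_num

theorem meas_threshold {Ω : Type*} [MeasurableSpace Ω] (μ : Measure Ω) [IsProbabilityMeasure μ]
    (X : Fin n → Ω → ℝ) (hX : ∀ i, Measurable (X i))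
    (hunif : ∀ i, Measure.map (X i) μ = volume.restrict (Set.Icc (0:ℝ) 1))
    (hind : iIndepFun X μ)
    {p : (Fin n → ℝ) → ℝ} (hp : IsWLP 0 1 n p) {t : ℝ} (ht0 : 0 ≤ t) (ht1 : t < 1) :
    μ {ω | t < p (fun i => X i ω)} =
      ∑ S ∈ (Finset.univ (α := Fin n)).powerset,
        if t < p (charVec 0 1 S) then
          ENNReal.ofReal ((1 - t) ^ S.card * t ^ (n - S.card)) else 0 := by
  set B : Finset (Fin n) → Fin n → Set ℝ :=
    fun S i => if i ∈ S then Set.Ioi t else Set.Iic t with hB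
  set A : Finset (Fin n) → Set Ω := fun S => ⋂ i, X i ⁻¹' B S i with hAdef
  have hA : ∀ S ω, ω ∈ A S ↔ (Finset.univ.filter fun i => t < X i ω) = S := by
    intro S ω
    simp only [hAdef, Set.mem_iInter, Set.mem_preimage, hB]
    constructor
    · intro h
      ext i
      simp only [Finset.mem_filter, Finset.mem_univ, true_and]
      constructor
      · intro hi
        by_contra hiS
        have := h i
        rw [if_neg hiS] at this
        exact absurd hi (not_lt.2 this)
      · intro hi
        have := h i
        rw [if_pos hi] at this
        exact this
    · intro h i
      by_cases hi : i ∈ S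
      · rw [if_pos hi]
        have : i ∈ Finset.univ.filter fun i => t < X i ω := h ▸ hi
        simpa using this
      · rw [if_neg hi]
        have : i ∉ Finset.univ.filter fun i => t < X i ω := h ▸ hi
        simp only [Finset.mem_filter, Finset.mem_univ, true_and, not_lt] at this
        exact this
  have hAmeas : ∀ S, MeasurableSet (A S) := by
    intro S
    apply MeasurableSet.iInter
    intro i
    apply (hX i)
    by_cases hi : i ∈ S <;> simp [hB, hi, measurableSet_Ioi, measurableSet_Iic]
  have hset : {ω | t < p (fun i => X i ω)} =
      ⋃ S ∈ (Finset.univ (α := Fin n)).powerset.filter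
        (fun S => t < p (charVec 0 1 S)), A S := by
    ext ω
    simp only [Set.mem_setOf_eq, Set.mem_iUnion, Finset.mem_filter, Finset.mem_powerset]
    constructor
    · intro h
      refine ⟨Finset.univ.filter fun i => t < X i ω, ⟨Finset.filter_subset _ _, ?_⟩, ?_⟩
      · exact (hp.threshold ht0 ht1 _).mp h
      · exact (hA _ ω).mpr rfl
    · rintro ⟨S, ⟨-, hS⟩, hω⟩
      rw [hp.threshold ht0 ht1]
      rwa [(hA S ω).mp hω]
  have hdisj : Set.PairwiseDisjoint
      ↑((Finset.univ (α := Fin n)).powerset.filter (fun S => t < p (charVec 0 1 S))) A := by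
    intro S _ S' _ hne
    rw [Function.onFun, Set.disjoint_left]
    intro ω hω hω'
    exact hne (((hA S ω).mp hω).symm.trans ((hA S' ω).mp hω'))
  have hprod : ∀ S : Finset (Fin n),
      μ (A S) = ENNReal.ofReal ((1 - t) ^ S.card * t ^ (n - S.card)) := by
    intro S
    have := hind.meas_iInter (s := fun i => X i ⁻¹' B S i) ?_
    · rw [hAdef, this]
      have h1 : ∀ i, μ (X i ⁻¹' B S i) =
          if i ∈ S then ENNReal.ofReal (1 - t) else ENNReal.ofReal t := by
        intro i
        by_cases hi : i ∈ S
        · simp only [hB, if_pos hi]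
          rw [← Measure.map_apply (hX i) measurableSet_Ioi, hunif i,
            Measure.restrict_apply measurableSet_Ioi]
          have : Set.Ioi t ∩ Set.Icc (0:ℝ) 1 = Set.Ioc t 1 := by
            ext x
            simp only [Set.mem_inter_iff, Set.mem_Ioi, Set.mem_Icc, Set.mem_Ioc]
            exact ⟨fun ⟨h1, _, h3⟩ => ⟨h1, h3⟩, fun ⟨h1, h2⟩ => ⟨h1, le_trans ht0 h1.le, h2⟩⟩
          rw [this, Real.volume_Ioc]
        · simp only [hB, if_neg hi]
          rw [← Measure.map_apply (hX i) measurableSet_Iic, hunif i,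
            Measure.restrict_apply measurableSet_Iic]
          have : Set.Iic t ∩ Set.Icc (0:ℝ) 1 = Set.Icc 0 t := by
            ext x
            simp only [Set.mem_inter_iff, Set.mem_Iic, Set.mem_Icc]
            exact ⟨fun ⟨h1, h2, _⟩ => ⟨h2, h1⟩, fun ⟨h1, h2⟩ => ⟨h2, h1, h2.trans ht1.le⟩⟩
          rw [this, Real.volume_Icc, sub_zero]
      simp_rw [h1]
      rw [Finset.prod_ite, Finset.prod_const, Finset.prod_const]
      have e1 : Finset.univ.filter (fun i => i ∈ S) = S := by
        ext i; simp
      have e2 : (Finset.univ.filter (fun i => i ∉ S)).card = n - S.card := by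
        rw [Finset.filter_not, Finset.filter_mem_eq_inter, Finset.univ_inter,
          Finset.card_sdiff_of_subset (Finset.subset_univ S), Finset.card_univ, Fintype.card_fin]
      rw [e1, e2, ENNReal.ofReal_mul (pow_nonneg (by linarith) _), ← ENNReal.ofReal_pow
        (by linarith), ← ENNReal.ofReal_pow ht0]
    · intro i
      refine ⟨B S i, ?_, rfl⟩
      by_cases hi : i ∈ S <;> simp [hB, hi, measurableSet_Ioi, measurableSet_Iic]
  rw [hset, measure_biUnion_finset hdisj (fun S _ => hAmeas S), Finset.sum_filter]
  exact Finset.sum_congr rfl fun S _ => by split <;> simp [hprod]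

lemma term_eval (c : ℝ) (hc0 : 0 ≤ c) (hc1 : c ≤ 1) (k m r : ℕ) (hr : 1 ≤ r) :
    ∫⁻ t in Set.Ioo (0:ℝ) 1,
        (if t < c then ENNReal.ofReal ((1 - t) ^ k * t ^ m) else 0)
          * ENNReal.ofReal ((r:ℝ) * t ^ (r - 1))
      = ENNReal.ofReal ((r:ℝ) * ∫ t in (0:ℝ)..c, t ^ (m + r - 1) * (1 - t) ^ k) := by
  have hcongr : ∀ t ∈ Set.Ioo (0:ℝ) 1,
      (if t < c then ENNReal.ofReal ((1 - t) ^ k * t ^ m) else 0)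
          * ENNReal.ofReal ((r:ℝ) * t ^ (r - 1))
        = (Set.Iio c).indicator
            (fun t => ENNReal.ofReal ((1 - t) ^ k * t ^ m * ((r:ℝ) * t ^ (r - 1)))) t := by
    intro t ht
    by_cases h : t < c
    · simp only [if_pos h, Set.indicator_of_mem (Set.mem_Iio.2 h)]
      rw [ENNReal.ofReal_mul (mul_nonneg (pow_nonneg (by linarith [ht.2]) _)
        (pow_nonneg ht.1.le _))]
    · simp [if_neg h, Set.indicator_of_notMem (fun hh => h (Set.mem_Iio.1 hh))]
  rw [setLIntegral_congr_fun measurableSet_Ioo hcongr,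
    lintegral_indicator measurableSet_Iio _, Measure.restrict_restrict measurableSet_Iio]
  have hinter : Set.Iio c ∩ Set.Ioo (0:ℝ) 1 = Set.Ioo 0 c := by
    ext t
    simp only [Set.mem_inter_iff, Set.mem_Iio, Set.mem_Ioo]
    exact ⟨fun ⟨h1, h2, _⟩ => ⟨h2, h1⟩, fun ⟨h1, h2⟩ => ⟨h2, h1, lt_of_lt_of_le h2 hc1⟩⟩
  rw [hinter]
  have hInt : IntegrableOn (fun t => (1 - t) ^ k * t ^ m * ((r:ℝ) * t ^ (r - 1)))
      (Set.Ioo 0 c) volume :=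
    ((Continuous.mul (((continuous_const.sub continuous_id).pow _).mul (continuous_id.pow _))
        (continuous_const.mul (continuous_pow _))).integrableOn_Icc (a := 0) (b := c)).mono_set
      Set.Ioo_subset_Icc_self
  rw [← ofReal_integral_eq_lintegral_ofReal hInt ?nn]
  case nn =>
    refine (ae_restrict_iff' measurableSet_Ioo).2 (ae_of_all _ fun t ht => ?_)
    have h1 : (0:ℝ) ≤ 1 - t := by linarith [ht.2, hc1]
    exact mul_nonneg (mul_nonneg (pow_nonneg h1 _) (pow_nonneg ht.1.le _))
      (mul_nonneg (by positivity) (pow_nonneg ht.1.le _))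
  congr 1
  rw [← integral_Ioc_eq_integral_Ioo, ← intervalIntegral.integral_of_le hc0]
  have hptwise : ∀ t : ℝ, (1 - t) ^ k * t ^ m * ((r:ℝ) * t ^ (r - 1))
      = (r:ℝ) * (t ^ (m + r - 1) * (1 - t) ^ k) := by
    intro t
    have he : m + r - 1 = m + (r - 1) := by omega
    rw [he, pow_add]; ring
  rw [show (fun t => (1 - t) ^ k * t ^ m * ((r:ℝ) * t ^ (r - 1)))
      = fun t => (r:ℝ) * (t ^ (m + r - 1) * (1 - t) ^ k) from funext hptwise,
    intervalIntegral.integral_const_mul]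

end Aux

/-- Raw moments of a weighted lattice polynomial of independent uniform [0,1]
random variables: (1/r) E[Y_p^r] = Σ_{S⊆[n]} B_{p(e_S)}(n − |S| + r, |S| + 1). -/
theorem wlp_uniform_moments {Ω : Type*} [MeasurableSpace Ω] (μ : Measure Ω)
    [IsProbabilityMeasure μ] (n : ℕ)
    (X : Fin n → Ω → ℝ) (hX : ∀ i, Measurable (X i))
    (hunif : ∀ i, Measure.map (X i) μ = volume.restrict (Set.Icc (0 : ℝ) 1))
    (hind : iIndepFun X μ)
    (p : (Fin n → ℝ) → ℝ) (hp : IsWLP 0 1 n p)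
    (r : ℕ) (hr : 1 ≤ r) :
    (1 / r : ℝ) * ∫ ω, (p (fun i => X i ω)) ^ r ∂μ =
      ∑ S ∈ (Finset.univ (α := Fin n)).powerset,
        ∫ t in (0 : ℝ)..(p (charVec 0 1 S)),
          t ^ (n - S.card + r - 1) * (1 - t) ^ S.card := by
  classical
  set f : Ω → ℝ := fun ω => p (fun i => X i ω) with hfdef
  have hfm : Measurable f :=
    hp.continuous.measurable.comp (measurable_pi_lambda _ fun i => hX i)
  have hXae : ∀ i, ∀ᵐ ω ∂μ, X i ω ∈ Set.Icc (0:ℝ) 1 := by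
    intro i
    have h0 : μ (X i ⁻¹' (Set.Icc (0:ℝ) 1)ᶜ) = 0 := by
      rw [← Measure.map_apply (hX i) measurableSet_Icc.compl, hunif i,
        Measure.restrict_apply measurableSet_Icc.compl]
      simp
    rw [ae_iff]
    exact h0
  have hf01 : ∀ᵐ ω ∂μ, f ω ∈ Set.Icc (0:ℝ) 1 := by
    filter_upwards [ae_all_iff.2 hXae] with ω hω using hp.mem_Icc hω
  have hf_nn : 0 ≤ᵐ[μ] f := hf01.mono fun ω h => h.1
  have hrne : (r:ℝ) ≠ 0 := Nat.cast_ne_zero.2 (by omega)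
  have hkey : ∀ y : ℝ, ∫ t in (0:ℝ)..y, (r:ℝ) * t ^ (r - 1) = y ^ r := by
    intro y
    rw [intervalIntegral.integral_const_mul, integral_pow, Nat.sub_add_cancel hr,
      zero_pow (by omega : r ≠ 0), sub_zero]
    have h : ((r - 1 : ℕ) : ℝ) + 1 = (r : ℝ) := by
      push_cast [Nat.cast_sub hr]; ring
    rw [h]
    field_simp
  have g_intble : ∀ t > 0, IntervalIntegrable (fun s : ℝ => (r:ℝ) * s ^ (r - 1)) volume 0 t :=
    fun t _ => (continuous_const.mul (continuous_pow _)).intervalIntegrable 0 t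
  have g_nn : ∀ᵐ t ∂(volume.restrict (Set.Ioi (0:ℝ))), 0 ≤ (r:ℝ) * t ^ (r - 1) :=
    (ae_restrict_iff' measurableSet_Ioi).2 (ae_of_all _ fun t ht =>
      mul_nonneg (Nat.cast_nonneg r) (pow_nonneg (le_of_lt ht) _))
  have key := lintegral_comp_eq_lintegral_meas_lt_mul μ hf_nn hfm.aemeasurable g_intble g_nn
  have hint : Integrable (fun ω => f ω ^ r) μ := by
    refine Integrable.mono' (integrable_const (1:ℝ)) ((hfm.pow_const r).aestronglyMeasurable) ?_
    filter_upwards [hf01] with ω hω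
    rw [Real.norm_eq_abs, abs_of_nonneg (pow_nonneg hω.1 r)]
    exact pow_le_one₀ hω.1 hω.2
  have hpow_nn : 0 ≤ᵐ[μ] fun ω => f ω ^ r := hf_nn.mono fun ω h => pow_nonneg h r
  have hL : (∫⁻ ω, ENNReal.ofReal (∫ t in (0:ℝ)..f ω, (r:ℝ) * t ^ (r - 1)) ∂μ)
      = ENNReal.ofReal (∫ ω, f ω ^ r ∂μ) := by
    simp_rw [hkey]
    exact (ofReal_integral_eq_lintegral_ofReal hint hpow_nn).symm
  have hc01 : ∀ S : Finset (Fin n), p (charVec 0 1 S) ∈ Set.Icc (0:ℝ) 1 :=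
    fun S => hp.mem_Icc (charVec_mem S)
  have hterm_nn : ∀ S : Finset (Fin n),
      0 ≤ (r:ℝ) * ∫ t in (0:ℝ)..(p (charVec 0 1 S)),
        t ^ (n - S.card + r - 1) * (1 - t) ^ S.card := by
    intro S
    refine mul_nonneg (Nat.cast_nonneg r) (intervalIntegral.integral_nonneg (hc01 S).1
      fun t htI => mul_nonneg (pow_nonneg htI.1 _) (pow_nonneg ?_ _))
    have := (hc01 S).2
    linarith [htI.2]
  have hone : μ {a | 1 < f a} = 0 := by
    have h := hf01.mono fun ω h => not_lt.2 h.2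
    rw [ae_iff] at h
    simpa using h
  have hR : (∫⁻ t in Set.Ioi (0:ℝ), μ {a | t < f a} * ENNReal.ofReal ((r:ℝ) * t ^ (r - 1)))
      = ENNReal.ofReal (∑ S ∈ (Finset.univ (α := Fin n)).powerset,
          (r:ℝ) * ∫ t in (0:ℝ)..(p (charVec 0 1 S)),
            t ^ (n - S.card + r - 1) * (1 - t) ^ S.card) := by
    rw [← Set.Ioo_union_Ici_eq_Ioi (zero_lt_one (α := ℝ)),
      lintegral_union measurableSet_Ici
        ((Set.Iio_disjoint_Ici le_rfl).mono_left Set.Ioo_subset_Iio_self)]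
    have h2 : ∫⁻ t in Set.Ici (1:ℝ), μ {a | t < f a} * ENNReal.ofReal ((r:ℝ) * t ^ (r - 1))
        = 0 := by
      have hz : ∀ t ∈ Set.Ici (1:ℝ),
          μ {a | t < f a} * ENNReal.ofReal ((r:ℝ) * t ^ (r - 1)) = 0 := by
        intro t ht
        have h0 : μ {a | t < f a} = 0 :=
          measure_mono_null (fun a (ha : t < f a) => lt_of_le_of_lt ht ha) hone
        rw [h0, zero_mul]
      rw [setLIntegral_congr_fun measurableSet_Ici hz, lintegral_zero]
    rw [h2, add_zero]
    have hcongr : ∀ t ∈ Set.Ioo (0:ℝ) 1,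
        μ {a | t < f a} * ENNReal.ofReal ((r:ℝ) * t ^ (r - 1))
          = ∑ S ∈ (Finset.univ (α := Fin n)).powerset,
              (if t < p (charVec 0 1 S) then
                ENNReal.ofReal ((1 - t) ^ S.card * t ^ (n - S.card)) else 0)
                * ENNReal.ofReal ((r:ℝ) * t ^ (r - 1)) := by
      intro t ht
      have : {a | t < f a} = {ω | t < p (fun i => X i ω)} := rfl
      rw [this, meas_threshold μ X hX hunif hind hp ht.1.le ht.2, Finset.sum_mul]
    rw [setLIntegral_congr_fun measurableSet_Ioo hcongr]
    rw [lintegral_finset_sum]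
    · rw [Finset.sum_congr rfl fun S _ =>
        term_eval (p (charVec 0 1 S)) (hc01 S).1 (hc01 S).2 S.card (n - S.card) r hr]
      exact (ENNReal.ofReal_sum_of_nonneg fun S _ => hterm_nn S).symm
    · intro S _
      refine Measurable.mul (Measurable.ite measurableSet_Iio ?_ measurable_const) ?_
      · exact (Continuous.measurable (((continuous_const.sub continuous_id).pow _).mul
          (continuous_id.pow _))).ennreal_ofReal
      · exact (Continuous.measurable (continuous_const.mul (continuous_pow _))).ennreal_ofReal
  rw [hL, hR] at key
  have hreal := (ENNReal.ofReal_eq_ofReal_iff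
    (integral_nonneg_of_ae hpow_nn) (Finset.sum_nonneg fun S _ => hterm_nn S)).1 key
  show (1 / r : ℝ) * ∫ ω, f ω ^ r ∂μ = _
  rw [hreal, Finset.mul_sum]
  refine Finset.sum_congr rfl fun S _ => ?_
  rw [← mul_assoc, one_div_mul_cancel hrne, one_mul]
end
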